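/- There exist a triangulated category T, objects X, Y, Z and maps such that the inclusion ⟨f₄f₃, f₂, f₁⟩ ⊆ ⟨f₄, f₃f₂, f₁⟩ is proper: for the sequence X →0 Y →1 Y →0 Z →1 Z, one has ⟨1_Z ∘ 0, 1_Y, 0⟩ = {0} while ⟨1_Z, 0 ∘ 1_Y, 0⟩ = T(ΣX, Z). In particular, ⟨0, 1_Y, 0⟩ = {0} and ⟨1_Z, 0, 0⟩ = T(ΣX, Z) for any objects X, Y, Z of any triangulated category. -/

import Mathlib

open CategoryTheory Category Limits Pretriangulated
open ZeroObject

variable {C : Type*} [Category C] [Preadditive C] [HasZeroObject C]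
  [HasShift C ℤ] [∀ n : ℤ, (shiftFunctor C n).Additive] [Pretriangulated C]

/-- The fiber-cofiber Toda bracket `⟨f₃, f₂, f₁⟩_fc`: all composites `β ∘ Σα` where,
for a distinguished triangle `F ⟶ X₁ ⟶ X₂ ⟶ ΣF` (so `F = Σ⁻¹C_{f₂}` and `ΣF = C_{f₂}`),
`α : X₀ ⟶ F` lifts `f₁` and `β : ΣF ⟶ X₃` extends `f₃`. -/
def fcBracket {X₀ X₁ X₂ X₃ : C} (f₁ : X₀ ⟶ X₁) (f₂ : X₁ ⟶ X₂) (f₃ : X₂ ⟶ X₃) :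
    Set (X₀⟦(1:ℤ)⟧ ⟶ X₃) :=
  { ψ | ∃ (F : C) (j : F ⟶ X₁) (q : X₂ ⟶ F⟦(1:ℤ)⟧)
      (_ : Triangle.mk j f₂ q ∈ distTriang C)
      (α : X₀ ⟶ F) (β : F⟦(1:ℤ)⟧ ⟶ X₃),
      α ≫ j = f₁ ∧ q ≫ β = f₃ ∧ ψ = α⟦(1:ℤ)⟧' ≫ β }

/-- The iterated cofiber Toda bracket `⟨f₃, f₂, f₁⟩_cc`. -/
def ccBracket {X₀ X₁ X₂ X₃ : C} (f₁ : X₀ ⟶ X₁) (f₂ : X₁ ⟶ X₂) (f₃ : X₂ ⟶ X₃) :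
    Set (X₀⟦(1:ℤ)⟧ ⟶ X₃) :=
  { ψ | ∃ (Cf : C) (q : X₁ ⟶ Cf) (ι : Cf ⟶ X₀⟦(1:ℤ)⟧)
      (_ : Triangle.mk f₁ q ι ∈ distTriang C)
      (φ : Cf ⟶ X₂), q ≫ φ = f₂ ∧ φ ≫ f₃ = ι ≫ ψ }

/-- The iterated fiber Toda bracket `⟨f₃, f₂, f₁⟩_ff`. -/
def ffBracket {X₀ X₁ X₂ X₃ : C} (f₁ : X₀ ⟶ X₁) (f₂ : X₁ ⟶ X₂) (f₃ : X₂ ⟶ X₃) :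
    Set (X₀⟦(1:ℤ)⟧ ⟶ X₃) :=
  { ψ | ∃ (G : C) (j : X₃⟦(-1:ℤ)⟧ ⟶ G) (κ : G ⟶ X₂)
      (_ : Triangle.mk j κ
        (f₃ ≫ (shiftFunctorCompIsoId C (-1:ℤ) (1:ℤ) (neg_add_cancel 1)).inv.app X₃) ∈
          distTriang C)
      (γ : X₁ ⟶ G) (δ : X₀ ⟶ X₃⟦(-1:ℤ)⟧),
      γ ≫ κ = f₂ ∧ f₁ ≫ γ = δ ≫ j ∧
      ψ = δ⟦(1:ℤ)⟧' ≫ (shiftFunctorCompIsoId C (-1:ℤ) (1:ℤ) (neg_add_cancel 1)).hom.app X₃ }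

/-- For the sequence `X →0 Y →1 Y →0 Z →1 Z` one has `⟨1_Z ∘ 0, 1_Y, 0⟩ = ⟨0, 1_Y, 0⟩ = {0}`
while `⟨1_Z, 0 ∘ 1_Y, 0⟩ = ⟨1_Z, 0, 0⟩ = T(ΣX, Z)`; in particular, whenever `T(ΣX, Z)` has a
nonzero element, the inclusion `⟨f₄f₃, f₂, f₁⟩ ⊆ ⟨f₄, f₃f₂, f₁⟩` is proper. -/
theorem todaBracket_inclusion_proper (X Y Z : C) :
    fcBracket (0 : X ⟶ Y) (𝟙 Y) (0 : Y ⟶ Z) = {0} ∧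
    fcBracket (0 : X ⟶ Y) (0 : Y ⟶ Z) (𝟙 Z) = Set.univ ∧
    ((∃ ψ : X⟦(1:ℤ)⟧ ⟶ Z, ψ ≠ 0) →
      fcBracket (0 : X ⟶ Y) (𝟙 Y) (0 : Y ⟶ Z) ⊂
        fcBracket (0 : X ⟶ Y) (0 : Y ⟶ Z) (𝟙 Z)) := by
  have h1 : fcBracket (0 : X ⟶ Y) (𝟙 Y) (0 : Y ⟶ Z) = {0} := by
    apply Set.eq_singleton_iff_unique_mem.2
    constructor
    · exact ⟨0, 0, 0, contractible_distinguished₁ Y, 0, 0, by simp, by simp, by simp⟩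
    · rintro ψ ⟨F, j, q, hT, α, β, hα, hβ, rfl⟩
      have hj : j = 0 := by rw [← Category.comp_id j]; exact comp_distTriang_mor_zero₁₂ _ hT
      have hq : q = 0 := by rw [← Category.id_comp q]; exact comp_distTriang_mor_zero₂₃ _ hT
      have hF : IsZero F := (Triangle.isZero₁_iff _ hT).2 ⟨hj, hq⟩
      have : α = 0 := hF.eq_of_tgt α 0
      subst this
      simp
  have h2 : fcBracket (0 : X ⟶ Y) (0 : Y ⟶ Z) (𝟙 Z) = Set.univ := by
    apply Set.eq_univ_of_forall
    intro ψ
    set e : (Z⟦(-1:ℤ)⟧)⟦(1:ℤ)⟧ ≅ Z :=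
      (shiftFunctorCompIsoId C (-1:ℤ) (1:ℤ) (neg_add_cancel 1)).app Z with he
    set F : C := Z⟦(-1:ℤ)⟧ ⊞ Y with hF
    set j : F ⟶ Y := biprod.snd with hj
    set q : Z ⟶ F⟦(1:ℤ)⟧ := e.inv ≫ (-(biprod.inl : Z⟦(-1:ℤ)⟧ ⟶ F)⟦(1:ℤ)⟧') with hq
    have hT : Triangle.mk j (0 : Y ⟶ Z) q ∈ distTriang C := by
      refine isomorphic_distinguished _
        (rot_of_distTriang _ (binaryBiproductTriangle_distinguished (Z⟦(-1:ℤ)⟧) Y)) _ ?_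
      refine Triangle.isoMk _ _ (Iso.refl _) (Iso.refl _) e.symm ?_ ?_ ?_
      · simp [hj]; exact (Category.comp_id _).trans (Category.id_comp _).symm
      · simp; exact zero_comp.trans comp_zero.symm
      · simp [hq]; show (-e.inv ≫ (shiftFunctor C 1).map biprod.inl) ≫ (shiftFunctor C 1).map (𝟙 F) = _; rw [CategoryTheory.Functor.map_id, Category.comp_id]; exact (Preadditive.comp_neg _ _).symm
    obtain ⟨a, ha⟩ : ∃ a : X ⟶ Z⟦(-1:ℤ)⟧, a⟦(1:ℤ)⟧' = -(ψ ≫ e.inv) :=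
      ⟨(shiftFunctor C (1:ℤ)).preimage (-(ψ ≫ e.inv)), Functor.map_preimage _ _⟩
    refine ⟨F, j, q, hT, biprod.lift a 0,
      (-(biprod.fst : F ⟶ Z⟦(-1:ℤ)⟧)⟦(1:ℤ)⟧') ≫ e.hom, by simp [hj], ?_, ?_⟩
    · rw [hq]
      simp only [Preadditive.neg_comp, Preadditive.comp_neg, neg_neg, assoc]
      rw [← Functor.map_comp_assoc, biprod.inl_fst]
      simp
    · simp only [Preadditive.neg_comp, Preadditive.comp_neg]
      rw [← Functor.map_comp_assoc, biprod.lift_fst, ha]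
      simp
  refine ⟨h1, h2, ?_⟩
  rintro ⟨ψ, hψ⟩
  rw [h1, h2]
  exact ⟨Set.subset_univ _, fun h => hψ (h (Set.mem_univ ψ))⟩
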